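/- arXiv:1904.08312 — 2 statements merged into one kernel-verified Lean document; each statement's English description precedes it below -/
import Mathlib

section
/- A harmonic function on a connected open set in ℝ^m cannot have isolated zeros unless it is identically zero: if u is harmonic on a domain D, u(x₀) = 0, and u is not identically zero, then every neighborhood of x₀ contains another zero of u. -/
open MeasureTheory Metric Real

noncomputable section

/-- The Laplacian of `u : ℝ^m → ℝ` as the sum of second partial derivatives. -/
def lap {m : ℕ} (u : EuclideanSpace ℝ (Fin m) → ℝ) (x : EuclideanSpace ℝ (Fin m)) : ℝ :=
  ∑ i : Fin m,
    fderiv ℝ (fun y => fderiv ℝ u y (EuclideanSpace.single i 1)) x (EuclideanSpace.single i 1)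

/-- `u` is harmonic on `s`: it is `C²` there and its Laplacian vanishes. -/
def IsHarmonicOn {m : ℕ} (u : EuclideanSpace ℝ (Fin m) → ℝ)
    (s : Set (EuclideanSpace ℝ (Fin m))) : Prop :=
  ContDiffOn ℝ 2 u s ∧ ∀ x ∈ s, lap u x = 0

/-- Average of `u` over the sphere `∂B_r(x)` w.r.t. the `(m-1)`-dimensional
Hausdorff (surface) measure. -/
def sphAvg {m : ℕ} (u : EuclideanSpace ℝ (Fin m) → ℝ) (x : EuclideanSpace ℝ (Fin m))
    (r : ℝ) : ℝ :=
  ((μH[(m : ℝ) - 1] (sphere x r)).toReal)⁻¹ * ∫ y in sphere x r, u y ∂(μH[(m : ℝ) - 1])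

/-- Average of `u` over the open ball `B_r(x)` w.r.t. Lebesgue measure. -/
def ballAvg {m : ℕ} (u : EuclideanSpace ℝ (Fin m) → ℝ) (x : EuclideanSpace ℝ (Fin m))
    (r : ℝ) : ℝ :=
  ((volume (ball x r)).toReal)⁻¹ * ∫ y in ball x r, u y

/-- The volume `ω_m` of the unit ball in `ℝ^m`. -/
def unitBallVol (m : ℕ) : ℝ := (volume (ball (0 : EuclideanSpace ℝ (Fin m)) 1)).toReal

open Filter Set
open scoped Topology RealInnerProductSpace

private lemma oneDim' {φ ψ : ℝ → ℝ} {a : ℝ} (hmin : IsLocalMin φ 0)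
    (hφ : ∀ᶠ t in 𝓝 (0:ℝ), HasDerivAt φ (ψ t) t) (hψ : HasDerivAt ψ a 0) : 0 ≤ a := by
  by_contra hlt
  push_neg at hlt
  have hψ0 : ψ 0 = 0 := hmin.hasDerivAt_eq_zero hφ.self_of_nhds
  have hslope : ∀ᶠ t in 𝓝[≠] (0:ℝ), slope ψ 0 t < 0 :=
    (hasDerivAt_iff_tendsto_slope.1 hψ).eventually_lt_const hlt
  rw [eventually_nhdsWithin_iff] at hslope
  obtain ⟨η, hη, Hs⟩ := Metric.eventually_nhds_iff.1 hslope
  obtain ⟨δ, hδ, Hd⟩ := Metric.eventually_nhds_iff.1 hφ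
  obtain ⟨δ', hδ', Hm⟩ := Metric.eventually_nhds_iff.1 hmin
  set t := min (min η δ) δ' / 2 with ht
  have ht0 : 0 < t := by positivity
  have htη : t < η := by
    have h1 : min (min η δ) δ' ≤ η := le_trans (min_le_left _ _) (min_le_left _ _)
    nlinarith [min_le_left (min η δ) δ']
  have htδ : t < δ := by
    have h1 : min (min η δ) δ' ≤ δ := le_trans (min_le_left _ _) (min_le_right _ _)
    nlinarith
  have htδ' : t < δ' := by
    have h1 : min (min η δ) δ' ≤ δ' := min_le_right _ _
    nlinarith
  have hψneg : ∀ c ∈ Ioc 0 t, ψ c < 0 := by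
    intro c hc
    have hdist : dist c (0:ℝ) < η := by
      rw [Real.dist_eq, sub_zero, abs_of_pos hc.1]; exact lt_of_le_of_lt hc.2 htη
    have := Hs hdist (mem_compl_singleton_iff.2 hc.1.ne')
    rw [slope_def_field] at this
    have : (ψ c - ψ 0) / (c - 0) < 0 := by
      simpa [div_eq_inv_mul, slope] using Hs hdist (mem_compl_singleton_iff.2 hc.1.ne')
    rw [hψ0, sub_zero, sub_zero] at this
    rcases div_neg_iff.1 this with h | h
    · linarith [hc.1, h.2]
    · exact h.1
  have hderiv : ∀ c ∈ Ioo (0:ℝ) t, HasDerivAt φ (ψ c) c := by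
    intro c hc
    apply Hd
    rw [Real.dist_eq, sub_zero, abs_of_pos hc.1]; exact lt_trans hc.2 htδ
  have hcont : ContinuousOn φ (Icc 0 t) := by
    intro c hc
    have : HasDerivAt φ (ψ c) c := by
      apply Hd
      rw [Real.dist_eq, sub_zero, abs_of_nonneg hc.1]; exact lt_of_le_of_lt hc.2 htδ
    exact this.continuousAt.continuousWithinAt
  obtain ⟨c, hc, hceq⟩ := exists_hasDerivAt_eq_slope φ ψ ht0 hcont hderiv
  have h1 : ψ c < 0 := hψneg c ⟨hc.1, hc.2.le⟩
  have h2 : φ 0 ≤ φ t := by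
    apply Hm; rw [Real.dist_eq, sub_zero, abs_of_pos ht0]; exact htδ'
  rw [hceq, sub_zero] at h1
  have : 0 ≤ (φ t - φ 0) / t := div_nonneg (by linarith) ht0.le
  linarith

private lemma dirSecond' {m : ℕ} {w : EuclideanSpace ℝ (Fin m) → ℝ}
    {U : Set (EuclideanSpace ℝ (Fin m))} (hU : IsOpen U)
    {y : EuclideanSpace ℝ (Fin m)} (hy : y ∈ U) (hw : ContDiffOn ℝ 2 w U)
    (hmin : IsLocalMin w y) (e : EuclideanSpace ℝ (Fin m)) :
    0 ≤ fderiv ℝ (fun z => fderiv ℝ w z e) y e := by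
  set L : ℝ → EuclideanSpace ℝ (Fin m) := fun t => y + t • e with hLdef
  have hL : ∀ t, HasDerivAt L e t := by
    intro t
    have h1 : HasDerivAt (fun t : ℝ => t • e) ((1:ℝ) • e) t := (hasDerivAt_id t).smul_const e
    have h2 := h1.const_add y
    rw [one_smul] at h2
    exact h2
  have hL0 : L 0 = y := by simp [hLdef]
  have hLc : Continuous L := by fun_prop
  have hdiff : DifferentiableOn ℝ w U := hw.differentiableOn (by norm_num)
  set G : EuclideanSpace ℝ (Fin m) → ℝ := fun z => fderiv ℝ w z e with hGdef
  have hmin' : IsLocalMin (w ∘ L) 0 := by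
    refine IsLocalMin.comp_continuous ?_ hLc.continuousAt
    rwa [hL0]
  have hφ : ∀ᶠ t in 𝓝 (0:ℝ), HasDerivAt (w ∘ L) ((G ∘ L) t) t := by
    have hUL : L ⁻¹' U ∈ 𝓝 (0:ℝ) := hLc.continuousAt.preimage_mem_nhds (hU.mem_nhds (hL0 ▸ hy))
    filter_upwards [hUL] with t ht
    have hdw : DifferentiableAt ℝ w (L t) := hdiff.differentiableAt (hU.mem_nhds ht)
    exact hdw.hasFDerivAt.comp_hasDerivAt t (hL t)
  have hF : ContDiffOn ℝ 1 (fderiv ℝ w) U := hw.fderiv_of_isOpen hU (by norm_num)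
  have hG : DifferentiableAt ℝ G y :=
    ((hF.differentiableOn (by norm_num)).differentiableAt (hU.mem_nhds hy)).clm_apply
      (differentiableAt_const e)
  have hψ : HasDerivAt (G ∘ L) (fderiv ℝ G y e) 0 := by
    have hG' : HasFDerivAt G (fderiv ℝ G y) (L 0) := hL0 ▸ hG.hasFDerivAt
    exact hG'.comp_hasDerivAt 0 (hL 0)
  exact oneDim' hmin' hφ hψ

private lemma lapSub' {m : ℕ} {v : EuclideanSpace ℝ (Fin m) → ℝ}
    {U : Set (EuclideanSpace ℝ (Fin m))} (hU : IsOpen U)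
    {y : EuclideanSpace ℝ (Fin m)} (hy : y ∈ U) (hv : ContDiffOn ℝ 2 v U)
    (x₀ : EuclideanSpace ℝ (Fin m)) (δ : ℝ) :
    lap (fun z => v z - δ * ⟪z - x₀, z - x₀⟫) y = lap v y - 2 * m * δ := by
  have hid : ∀ z : EuclideanSpace ℝ (Fin m),
      HasFDerivAt (fun z : EuclideanSpace ℝ (Fin m) => z - x₀)
        (ContinuousLinearMap.id ℝ (EuclideanSpace ℝ (Fin m))) z :=
    fun z => (hasFDerivAt_id z).sub_const x₀
  have key : ∀ i : Fin m,
      fderiv ℝ (fun z => fderiv ℝ (fun z => v z - δ * ⟪z - x₀, z - x₀⟫) z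
          (EuclideanSpace.single i 1)) y (EuclideanSpace.single i 1)
      = fderiv ℝ (fun z => fderiv ℝ v z (EuclideanSpace.single i 1)) y
          (EuclideanSpace.single i 1) - 2 * δ := by
    intro i
    set e : EuclideanSpace ℝ (Fin m) := EuclideanSpace.single i (1:ℝ) with he
    have hee : ⟪e, e⟫ = 1 := by
      simp [he, EuclideanSpace.inner_single_left, EuclideanSpace.single_apply]
    have h1 : ∀ z ∈ U, fderiv ℝ (fun z => v z - δ * ⟪z - x₀, z - x₀⟫) z e
        = fderiv ℝ v z e - δ * (⟪z - x₀, e⟫ + ⟪e, z - x₀⟫) := by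
      intro z hz
      have hvz : HasFDerivAt v (fderiv ℝ v z) z :=
        ((hv.differentiableOn (by norm_num)).differentiableAt (hU.mem_nhds hz)).hasFDerivAt
      have hq := ((hid z).inner ℝ (hid z)).const_mul δ
      have hw := hvz.fun_sub hq
      rw [hw.fderiv]
      simp [fderivInnerCLM_apply]
    have h2 : (fun z => fderiv ℝ (fun z => v z - δ * ⟪z - x₀, z - x₀⟫) z e)
        =ᶠ[𝓝 y] (fun z => fderiv ℝ v z e - δ * (⟪z - x₀, e⟫ + ⟪e, z - x₀⟫)) := by
      filter_upwards [hU.mem_nhds hy] with z hz using h1 z hz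
    rw [h2.fderiv_eq]
    have hF : ContDiffOn ℝ 1 (fderiv ℝ v) U := hv.fderiv_of_isOpen hU (by norm_num)
    have hGv : HasFDerivAt (fun z => fderiv ℝ v z e)
        (fderiv ℝ (fun z => fderiv ℝ v z e) y) y :=
      (((hF.differentiableOn (by norm_num)).differentiableAt (hU.mem_nhds hy)).clm_apply
        (differentiableAt_const e)).hasFDerivAt
    have hin1 := (hid y).inner ℝ (hasFDerivAt_const e y)
    have hin2 := (hasFDerivAt_const e y).inner ℝ (hid y)
    have hB := hGv.fun_sub (((hin1.fun_add hin2)).const_mul δ)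
    rw [hB.fderiv]
    simp [fderivInnerCLM_apply, hee]
    rw [← real_inner_self_eq_norm_sq, hee]; ring
  simp only [lap]
  rw [Finset.sum_congr rfl (fun i _ => key i), Finset.sum_sub_distrib]
  simp [Finset.card_univ]
  ring

private lemma lapNeg' {m : ℕ} (u : EuclideanSpace ℝ (Fin m) → ℝ) (x : EuclideanSpace ℝ (Fin m)) :
    lap (fun z => -u z) x = - lap u x := by
  simp only [lap, ← Finset.sum_neg_distrib]
  refine Finset.sum_congr rfl fun i _ => ?_
  have h1 : (fun z => fderiv ℝ (fun z => -u z) z (EuclideanSpace.single i (1:ℝ)))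
      = fun z => -(fderiv ℝ u z (EuclideanSpace.single i (1:ℝ))) := by
    funext z; rw [fderiv_fun_neg]; rfl
  rw [h1, fderiv_fun_neg]
  rfl

private lemma keyMin' {m : ℕ} (hm : 2 ≤ m) {v : EuclideanSpace ℝ (Fin m) → ℝ}
    {D : Set (EuclideanSpace ℝ (Fin m))} (hD : IsOpen D)
    (hv : ContDiffOn ℝ 2 v D) (hlap : ∀ x ∈ D, lap v x = 0)
    {x₀ : EuclideanSpace ℝ (Fin m)} {r : ℝ} (hr : 0 < r)
    (hball : Metric.closedBall x₀ r ⊆ D) (h0 : v x₀ = 0)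
    (hpos : ∀ p ∈ Metric.sphere x₀ r, 0 < v p) : False := by
  haveI : Nontrivial (EuclideanSpace ℝ (Fin m)) :=
    Module.nontrivial_of_finrank_pos (R := ℝ)
      (by rw [finrank_euclideanSpace_fin]; omega)
  have hsne : (Metric.sphere x₀ r).Nonempty := NormedSpace.sphere_nonempty.mpr hr.le
  have hsub : Metric.sphere x₀ r ⊆ D := fun p hp => hball (Metric.sphere_subset_closedBall hp)
  obtain ⟨z, hz, hzmin⟩ := (isCompact_sphere x₀ r).exists_isMinOn hsne
    (hv.continuousOn.mono hsub)
  have hc : 0 < v z := hpos z hz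
  set δ : ℝ := v z / (2 * r ^ 2) with hδdef
  have hδ : 0 < δ := by positivity
  set w : EuclideanSpace ℝ (Fin m) → ℝ := fun x => v x - δ * ⟪x - x₀, x - x₀⟫ with hwdef
  have hq : ContDiff ℝ 2 (fun x : EuclideanSpace ℝ (Fin m) => δ * ⟪x - x₀, x - x₀⟫) := by
    have hsub' : ContDiff ℝ 2 (fun x : EuclideanSpace ℝ (Fin m) => x - x₀) :=
      contDiff_id.sub contDiff_const
    exact contDiff_const.mul (hsub'.inner ℝ hsub')
  have hwC : ContDiffOn ℝ 2 w D := hv.sub hq.contDiffOn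
  obtain ⟨y, hy, hymin⟩ := (isCompact_closedBall x₀ r).exists_isMinOn
    ⟨x₀, Metric.mem_closedBall_self hr.le⟩ (hwC.continuousOn.mono hball)
  have hw0 : w x₀ = 0 := by simp [hwdef, h0]
  have hyle : w y ≤ 0 := hw0 ▸ isMinOn_iff.1 hymin x₀ (Metric.mem_closedBall_self hr.le)
  have hsphpos : ∀ p ∈ Metric.sphere x₀ r, 0 < w p := by
    intro p hp
    have hpn : ‖p - x₀‖ = r := mem_sphere_iff_norm.1 hp
    have hinner : ⟪p - x₀, p - x₀⟫ = r ^ 2 := by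
      rw [real_inner_self_eq_norm_sq, hpn]
    have hvp : v z ≤ v p := isMinOn_iff.1 hzmin p hp
    have hδr : δ * r ^ 2 = v z / 2 := by
      field_simp [hδdef]
      rw [hδdef]; field_simp
    simp only [hwdef, hinner]
    rw [hδr]
    linarith
  have hyball : y ∈ Metric.ball x₀ r := by
    have hd : dist y x₀ ≤ r := Metric.mem_closedBall.1 hy
    rcases lt_or_eq_of_le hd with h | h
    · exact Metric.mem_ball.2 h
    · exact absurd hyle (not_le.2 (hsphpos y (Metric.mem_sphere.2 h)))
  have hDy : y ∈ D := hball (Metric.ball_subset_closedBall hyball)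
  have hlocal : IsLocalMin w y :=
    hymin.isLocalMin (mem_of_superset (Metric.isOpen_ball.mem_nhds hyball)
      Metric.ball_subset_closedBall)
  have h1 : 0 ≤ lap w y := Finset.sum_nonneg fun i _ => dirSecond' hD hDy hwC hlocal _
  have h2 : lap w y = lap v y - 2 * m * δ := lapSub' hD hDy hv x₀ δ
  rw [h2, hlap y hDy] at h1
  have hm0 : (0:ℝ) < m := by exact_mod_cast (by omega : 0 < m)
  nlinarith

theorem zeros_not_isolated {m : ℕ} (hm : 2 ≤ m) (D : Set (EuclideanSpace ℝ (Fin m)))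
    (hD : IsOpen D) (hDc : IsConnected D) (u : EuclideanSpace ℝ (Fin m) → ℝ)
    (hu : IsHarmonicOn u D) (x₀ : EuclideanSpace ℝ (Fin m)) (hx₀ : x₀ ∈ D)
    (hzero : u x₀ = 0) (hnz : ¬ ∀ x ∈ D, u x = 0) :
    ∀ ε > (0 : ℝ), ∃ y ∈ D, y ≠ x₀ ∧ dist y x₀ < ε ∧ u y = 0 := by
  intro ε hε
  by_contra hcon
  push_neg at hcon
  obtain ⟨r1, hr1, hball1⟩ := Metric.isOpen_iff.1 hD x₀ hx₀
  set r : ℝ := min r1 ε / 2 with hrdef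
  have hr : 0 < r := by positivity
  have hrr1 : r < r1 := by
    have h1 : min r1 ε ≤ r1 := min_le_left _ _
    nlinarith
  have hrε : r < ε := by
    have h1 : min r1 ε ≤ ε := min_le_right _ _
    nlinarith
  have hball : Metric.closedBall x₀ r ⊆ D := fun p hp =>
    hball1 (Metric.mem_ball.2 (lt_of_le_of_lt (Metric.mem_closedBall.1 hp) hrr1))
  have hsub : Metric.sphere x₀ r ⊆ D := fun p hp =>
    hball (Metric.sphere_subset_closedBall hp)
  have hsnz : ∀ p ∈ Metric.sphere x₀ r, u p ≠ 0 := by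
    intro p hp
    have hd : dist p x₀ = r := Metric.mem_sphere.1 hp
    refine hcon p (hsub hp) ?_ (by rw [hd]; exact hrε)
    intro hpx
    rw [hpx, dist_self] at hd
    exact absurd hd.symm hr.ne'
  have hrank : 1 < Module.rank ℝ (EuclideanSpace ℝ (Fin m)) := by
    rw [← Module.finrank_eq_rank, finrank_euclideanSpace_fin]
    exact_mod_cast (by omega : 1 < m)
  have hconn := (isConnected_sphere hrank x₀ hr.le).isPreconnected
  have hcontS : ContinuousOn u (Metric.sphere x₀ r) := hu.1.continuousOn.mono hsub
  by_cases hp : ∀ p ∈ Metric.sphere x₀ r, 0 < u p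
  · exact keyMin' hm hD hu.1 hu.2 hr hball hzero hp
  · push_neg at hp
    obtain ⟨a, ha, ha0⟩ := hp
    have ha' : u a < 0 := lt_of_le_of_ne ha0 (hsnz a ha)
    by_cases hn : ∀ p ∈ Metric.sphere x₀ r, u p < 0
    · refine keyMin' hm hD hu.1.neg (fun x hx => ?_) hr hball (by simp [hzero])
        (fun p hp => by simpa using hn p hp)
      rw [lapNeg' u x, hu.2 x hx, neg_zero]
    · push_neg at hn
      obtain ⟨b, hb, hb0⟩ := hn
      have h0mem : (0:ℝ) ∈ Set.Icc (u a) (u b) := ⟨ha'.le, hb0⟩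
      obtain ⟨p, hpS, hp0⟩ := hconn.intermediate_value ha hb hcontS h0mem
      exact hsnz p hpS hp0
end
end

section
/- If a continuous function u on the closure of a bounded domain D has the restricted mean value property with respect to spheres, then the maximum of u over the closure of D is attained on the boundary ∂D. -/
open MeasureTheory Metric Real

noncomputable section

lemma euc_hM_lt_top {k : ℕ} {s : Set (EuclideanSpace ℝ (Fin k))}
    (hs : Bornology.IsBounded s) : μH[(k:ℝ)] s < ⊤ := by
  set φ := EuclideanSpace.equiv (Fin k) ℝ with hφ
  have h1 : s = φ.symm '' (φ '' s) := by simp [Set.image_image]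
  have h2 := ((φ.symm : (Fin k → ℝ) →L[ℝ] EuclideanSpace ℝ (Fin k)).lipschitz).hausdorffMeasure_image_le
    (by positivity : (0:ℝ) ≤ (k:ℝ)) (φ '' s)
  have hpi : (μH[(k:ℝ)] : Measure (Fin k → ℝ)) = volume := by
    simpa using hausdorffMeasure_pi_real (ι := Fin k)
  rw [hpi] at h2
  have hb : Bornology.IsBounded (φ '' s) :=
    (φ : EuclideanSpace ℝ (Fin k) →L[ℝ] (Fin k → ℝ)).lipschitz.isBounded_image hs
  have hvol : volume (φ '' s) < ⊤ := hb.measure_lt_top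
  calc μH[(k:ℝ)] s = μH[(k:ℝ)] (φ.symm '' (φ '' s)) := by rw [← h1]
  _ ≤ _ := h2
  _ < ⊤ := ENNReal.mul_lt_top
      (by simp [ENNReal.rpow_natCast]) hvol

lemma euc_hM_pos {k : ℕ} {s : Set (EuclideanSpace ℝ (Fin k))}
    (hs : (interior s).Nonempty) : 0 < μH[(k:ℝ)] s := by
  set φ := EuclideanSpace.equiv (Fin k) ℝ with hφ
  have h2 := ((φ : EuclideanSpace ℝ (Fin k) →L[ℝ] (Fin k → ℝ)).lipschitz).hausdorffMeasure_image_le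
    (by positivity : (0:ℝ) ≤ (k:ℝ)) s
  have hpi : (μH[(k:ℝ)] : Measure (Fin k → ℝ)) = volume := by
    simpa using hausdorffMeasure_pi_real (ι := Fin k)
  rw [hpi] at h2
  have hopen : (interior (φ '' s)).Nonempty := by
    obtain ⟨z, hz⟩ := hs
    refine ⟨φ z, ?_⟩
    have hop : IsOpen (φ '' interior s) := φ.toHomeomorph.isOpenMap _ isOpen_interior
    have hsub : φ '' interior s ⊆ φ '' s := Set.image_mono interior_subset
    exact interior_maximal hsub hop ⟨z, hz, rfl⟩
  have hvol : 0 < volume (φ '' s) := by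
    calc 0 < volume (interior (φ '' s)) := isOpen_interior.measure_pos _ hopen
    _ ≤ _ := measure_mono interior_subset
  by_contra h
  push_neg at h
  have h0 : μH[(k:ℝ)] s = 0 := le_antisymm h zero_le
  rw [h0, mul_zero] at h2
  exact absurd (hvol.trans_le h2) (by simp)

variable {m : ℕ}

local notation "E" => EuclideanSpace ℝ (Fin m)

def subIso (K : Submodule ℝ (EuclideanSpace ℝ (Fin m))) (x : E) :
    EuclideanSpace ℝ (Fin (Module.finrank ℝ K)) → E :=
  fun v => x + ((stdOrthonormalBasis ℝ K).repr.symm v : E)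

lemma subIso_isometry (K : Submodule ℝ (EuclideanSpace ℝ (Fin m))) (x : E) :
    Isometry (subIso K x) := by
  intro v w
  simp only [subIso, edist_dist, dist_eq_norm]
  have : x + ((stdOrthonormalBasis ℝ K).repr.symm v : E)
      - (x + ((stdOrthonormalBasis ℝ K).repr.symm w : E))
      = (((stdOrthonormalBasis ℝ K).repr.symm v - (stdOrthonormalBasis ℝ K).repr.symm w : K) : E) := by
    rw [add_sub_add_left_eq_sub, Submodule.coe_sub]
  rw [this]
  rw [Submodule.norm_coe, ← LinearIsometryEquiv.map_sub, LinearIsometryEquiv.norm_map]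

lemma subIso_image_ball (K : Submodule ℝ (EuclideanSpace ℝ (Fin m))) (x : E) (ρ : ℝ) :
    subIso K x '' ball 0 ρ = {w : E | w - x ∈ K ∧ dist w x < ρ} := by
  ext w
  constructor
  · rintro ⟨v, hv, rfl⟩
    simp only [mem_ball, dist_zero_right] at hv
    constructor
    · simp only [subIso, add_sub_cancel_left]
      exact ((stdOrthonormalBasis ℝ K).repr.symm v).2
    · simp only [subIso, dist_eq_norm, add_sub_cancel_left]
      rw [Submodule.norm_coe, LinearIsometryEquiv.norm_map]
      exact hv
  · rintro ⟨h1, h2⟩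
    refine ⟨(stdOrthonormalBasis ℝ K).repr ⟨w - x, h1⟩, ?_, ?_⟩
    · simp only [mem_ball, dist_zero_right, LinearIsometryEquiv.norm_map]
      rw [dist_eq_norm] at h2
      exact h2
    · simp [subIso]

lemma sub_hM_lt_top {K : Submodule ℝ (EuclideanSpace ℝ (Fin m))} {x : E} {s : Set E}
    (hb : Bornology.IsBounded s) (hsub : s ⊆ {w : E | w - x ∈ K}) :
    μH[(Module.finrank ℝ K : ℝ)] s < ⊤ := by
  have hrange : s ⊆ Set.range (subIso K x) := by
    intro w hw
    exact ⟨(stdOrthonormalBasis ℝ K).repr ⟨w - x, hsub hw⟩, by simp [subIso]⟩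
  have h1 : s = subIso K x '' (subIso K x ⁻¹' s) := by
    rw [Set.image_preimage_eq_inter_range, Set.inter_eq_left.mpr hrange]
  rw [h1, (subIso_isometry K x).hausdorffMeasure_image (Or.inl (by positivity))]
  exact euc_hM_lt_top (((subIso_isometry K x).antilipschitz).isBounded_preimage hb)

lemma sub_hM_pos (K : Submodule ℝ (EuclideanSpace ℝ (Fin m))) (x : E) {ρ : ℝ} (hρ : 0 < ρ) :
    0 < μH[(Module.finrank ℝ K : ℝ)] {w : E | w - x ∈ K ∧ dist w x < ρ} := by
  rw [← subIso_image_ball K x ρ,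
    (subIso_isometry K x).hausdorffMeasure_image (Or.inl (by positivity))]
  exact euc_hM_pos ⟨0, by simp [isOpen_ball.interior_eq, mem_ball_self hρ]⟩

open RealInnerProductSpace

section Geom

variable {x n : EuclideanSpace ℝ (Fin m)} {r : ℝ}

lemma norm_le_norm_of_sq {a b : EuclideanSpace ℝ (Fin m)} (h : ‖a‖^2 ≤ ‖b‖^2) : ‖a‖ ≤ ‖b‖ := by
  nlinarith [norm_nonneg a, norm_nonneg b]

/-- key identity : `‖v + c • n‖² = ‖v‖² + 2c⟪v,n⟫ + c²` for unit `n`. -/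
lemma norm_add_smul_sq (hn : ‖n‖ = 1) (v : EuclideanSpace ℝ (Fin m)) (c : ℝ) :
    ‖v + c • n‖^2 = ‖v‖^2 + 2 * c * ⟪v, n⟫ + c^2 := by
  rw [← real_inner_self_eq_norm_sq, ← real_inner_self_eq_norm_sq]
  simp only [inner_add_add_self, real_inner_smul_left, real_inner_smul_right,
    real_inner_self_eq_norm_sq, hn]
  rw [real_inner_comm n v]
  have hcn : ‖c • n‖^2 = c^2 := by rw [norm_smul, hn]; simp [sq_abs]
  rw [hcn]; ring

/-- The affine orthogonal projection onto the hyperplane through `x` orthogonal to `n`. -/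
def projH (x n : EuclideanSpace ℝ (Fin m)) (z : EuclideanSpace ℝ (Fin m)) :
    EuclideanSpace ℝ (Fin m) := z - ⟪z - x, n⟫ • n

lemma projH_lipschitz (hn : ‖n‖ = 1) : LipschitzWith 1 (projH x n) := by
  apply LipschitzWith.of_dist_le_mul
  intro z w
  simp only [dist_eq_norm, projH, NNReal.coe_one, one_mul]
  have h1 : z - ⟪z - x, n⟫ • n - (w - ⟪w - x, n⟫ • n)
      = (z - w) + (-⟪z - w, n⟫) • n := by
    have : ⟪z - x, n⟫ - ⟪w - x, n⟫ = ⟪z - w, n⟫ := by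
      rw [← inner_sub_left]; congr 1; abel
    rw [← this]; module
  rw [h1]
  apply norm_le_norm_of_sq
  rw [norm_add_smul_sq hn]
  nlinarith [real_inner_self_eq_norm_sq (z - w), sq_nonneg (⟪z - w, n⟫)]

lemma projH_sub_mem (hn : ‖n‖ = 1) (z : EuclideanSpace ℝ (Fin m)) :
    projH x n z - x ∈ (ℝ ∙ n)ᗮ := by
  rw [Submodule.mem_orthogonal_singleton_iff_inner_right]
  have : projH x n z - x = (z - x) + (-⟪z - x, n⟫) • n := by
    simp only [projH]; module
  rw [this, inner_add_right, real_inner_smul_right, real_inner_comm,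
    real_inner_self_eq_norm_sq, hn]
  ring

lemma proj_point_lemma (hn : ‖n‖ = 1) {w : EuclideanSpace ℝ (Fin m)}
    (hw : w - x ∈ (ℝ ∙ n)ᗮ) (c : ℝ) :
    ‖w + c • n - x‖^2 = ‖w - x‖^2 + c^2 ∧ ⟪w + c • n - x, n⟫ = c ∧
      projH x n (w + c • n) = w := by
  have horth : ⟪w - x, n⟫ = 0 := by
    rw [Submodule.mem_orthogonal_singleton_iff_inner_right] at hw
    rw [real_inner_comm]; exact hw
  have h1 : w + c • n - x = (w - x) + c • n := by abel
  have h2 : ⟪w + c • n - x, n⟫ = c := by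
    rw [h1, inner_add_left, horth, real_inner_smul_left, real_inner_self_eq_norm_sq, hn]
    ring
  refine ⟨?_, h2, ?_⟩
  · rw [h1, norm_add_smul_sq hn, horth]; ring
  · simp only [projH, h2]; abel

end Geom

section Caps

variable {x n : EuclideanSpace ℝ (Fin m)} {r : ℝ}

lemma finrank_hyper (hm : 1 ≤ m) (hn : n ≠ 0) :
    ((Module.finrank ℝ ((ℝ ∙ n)ᗮ : Submodule ℝ (EuclideanSpace ℝ (Fin m)))) : ℝ)
      = (m : ℝ) - 1 := by
  haveI : Fact (Module.finrank ℝ (EuclideanSpace ℝ (Fin m)) = (m - 1) + 1) :=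
    ⟨by rw [finrank_euclideanSpace_fin]; omega⟩
  rw [Submodule.finrank_orthogonal_span_singleton (n := m - 1) hn]
  rw [Nat.cast_sub hm, Nat.cast_one]

/-- The graph map recovering the cap from its projection. -/
def graphMap (x n : EuclideanSpace ℝ (Fin m)) (r : ℝ) (w : EuclideanSpace ℝ (Fin m)) :
    EuclideanSpace ℝ (Fin m) := w + Real.sqrt (r^2 - ‖w - x‖^2) • n

set_option maxHeartbeats 1000000 in
lemma graphMap_lipschitzOn (hn : ‖n‖ = 1) (hr : 0 < r) :
    LipschitzOnWith 4 (graphMap x n r) {w | ‖w - x‖^2 ≤ r^2 - (r/2)^2} := by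
  apply LipschitzOnWith.of_dist_le_mul
  intro w hw w' hw'
  simp only [Set.mem_setOf_eq] at hw hw'
  set A := r^2 - ‖w - x‖^2 with hA
  set A' := r^2 - ‖w' - x‖^2 with hA'
  have hA4 : r^2/4 ≤ A := by rw [hA]; nlinarith
  have hA4' : r^2/4 ≤ A' := by rw [hA']; nlinarith
  have hsa : r/2 ≤ Real.sqrt A := by
    rw [show r^2/4 = (r/2)^2 by ring] at hA4
    calc r/2 = Real.sqrt ((r/2)^2) := (Real.sqrt_sq (by linarith)).symm
    _ ≤ _ := Real.sqrt_le_sqrt hA4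
  have hsa' : r/2 ≤ Real.sqrt A' := by
    rw [show r^2/4 = (r/2)^2 by ring] at hA4'
    calc r/2 = Real.sqrt ((r/2)^2) := (Real.sqrt_sq (by linarith)).symm
    _ ≤ _ := Real.sqrt_le_sqrt hA4'
  have hr2 : (0:ℝ) < r^2 := by positivity
  have hsq : Real.sqrt A ^ 2 = A := Real.sq_sqrt (by linarith)
  have hsq' : Real.sqrt A' ^ 2 = A' := Real.sq_sqrt (by linarith)
  have hwr : ‖w - x‖ ≤ r := by nlinarith [norm_nonneg (w - x)]
  have hwr' : ‖w' - x‖ ≤ r := by nlinarith [norm_nonneg (w' - x)]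
  have hnorm : |‖w' - x‖ - ‖w - x‖| ≤ ‖w - w'‖ := by
    rw [abs_sub_comm]
    calc |‖w - x‖ - ‖w' - x‖| ≤ ‖(w - x) - (w' - x)‖ := abs_norm_sub_norm_le _ _
    _ = ‖w - w'‖ := by congr 1; abel
  have hAA : |A - A'| ≤ 2 * r * ‖w - w'‖ := by
    rw [hA, hA']
    rw [abs_le] at hnorm ⊢
    constructor <;> nlinarith [norm_nonneg (w - x), norm_nonneg (w' - x)]
  have hprod : (Real.sqrt A - Real.sqrt A') * (Real.sqrt A + Real.sqrt A') = A - A' := by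
    linear_combination hsq - hsq'
  have hdiff : |Real.sqrt A - Real.sqrt A'| ≤ 2 * ‖w - w'‖ := by
    rw [abs_le] at hAA ⊢
    have hx1 : (0:ℝ) ≤ Real.sqrt A + Real.sqrt A' - r := by linarith
    have hx2 := mul_nonneg (norm_nonneg (w - w')) hx1
    constructor
    · nlinarith [hAA.1, hprod]
    · nlinarith [hAA.2, hprod]
  have : graphMap x n r w - graphMap x n r w'
      = (w - w') + (Real.sqrt A - Real.sqrt A') • n := by
    simp only [graphMap, ← hA, ← hA']
    rw [sub_smul]; abel
  rw [dist_eq_norm, dist_eq_norm, this]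
  calc ‖(w - w') + (Real.sqrt A - Real.sqrt A') • n‖
      ≤ ‖w - w'‖ + ‖(Real.sqrt A - Real.sqrt A') • n‖ := norm_add_le _ _
  _ = ‖w - w'‖ + |Real.sqrt A - Real.sqrt A'| := by rw [norm_smul, hn, Real.norm_eq_abs, mul_one]
  _ ≤ ‖w - w'‖ + 2 * ‖w - w'‖ := by linarith
  _ ≤ ((4:NNReal):ℝ) * ‖w - w'‖ := by
      push_cast
      nlinarith [norm_nonneg (w - w')]

lemma graphMap_proj (hn : ‖n‖ = 1) {z : EuclideanSpace ℝ (Fin m)} (hz : dist z x = r)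
    (hc : 0 ≤ ⟪z - x, n⟫) : graphMap x n r (projH x n z) = z := by
  set c := ⟪z - x, n⟫ with hcdef
  have hmem := projH_sub_mem (x := x) hn z
  obtain ⟨h1, -, h3⟩ := proj_point_lemma hn hmem c
  have hzc : projH x n z + c • n = z := by simp only [projH]; abel
  have hnz : ‖z - x‖^2 = r^2 := by rw [← dist_eq_norm, hz]
  rw [hzc] at h1
  have : r^2 - ‖projH x n z - x‖^2 = c^2 := by rw [← hnz, h1]; ring
  rw [graphMap, this, Real.sqrt_sq hc, hzc]

end Caps

section CapMeasure

variable {x n : EuclideanSpace ℝ (Fin m)} {r : ℝ}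

lemma projH_norm_sq (hn : ‖n‖ = 1) (z : EuclideanSpace ℝ (Fin m)) :
    ‖projH x n z - x‖^2 = ‖z - x‖^2 - ⟪z - x, n⟫^2 := by
  set c := ⟪z - x, n⟫ with hc
  obtain ⟨h1, -, -⟩ := proj_point_lemma hn (projH_sub_mem (x := x) hn z) c
  have hzc : projH x n z + c • n = z := by simp only [projH]; abel
  rw [hzc] at h1
  linarith

lemma cap_hM_lt_top (hm : 1 ≤ m) (hn : ‖n‖ = 1) (hr : 0 < r) (x : EuclideanSpace ℝ (Fin m)) :
    μH[(m:ℝ)-1] (sphere x r ∩ {z | r/2 ≤ ⟪z - x, n⟫}) < ⊤ := by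
  have hd0 : (0:ℝ) ≤ (m:ℝ) - 1 := by
    have : (1:ℝ) ≤ (m:ℝ) := by exact_mod_cast hm
    linarith
  have hn0 : n ≠ 0 := fun h => by rw [h, norm_zero] at hn; linarith
  set C := sphere x r ∩ {z | r/2 ≤ ⟪z - x, n⟫} with hC
  have hsphC : ∀ z ∈ C, ‖z - x‖ = r ∧ r/2 ≤ ⟪z - x, n⟫ := by
    rintro z ⟨h1, h2⟩
    exact ⟨by rw [← dist_eq_norm]; exact mem_sphere.mp h1, h2⟩
  have hCsub : C ⊆ graphMap x n r '' (projH x n '' C) := by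
    intro z hz
    obtain ⟨h1, h2⟩ := hsphC z hz
    exact ⟨projH x n z, ⟨z, hz, rfl⟩,
      graphMap_proj hn (by rw [dist_eq_norm]; exact h1) (by linarith)⟩
  have himg1 : projH x n '' C ⊆ {w | ‖w - x‖^2 ≤ r^2 - (r/2)^2} := by
    rintro w ⟨z, hz, rfl⟩
    obtain ⟨h1, h2⟩ := hsphC z hz
    have hcs : |⟪z - x, n⟫| ≤ ‖z - x‖ := by
      calc |⟪z - x, n⟫| ≤ ‖z - x‖ * ‖n‖ := abs_real_inner_le_norm _ _
      _ = ‖z - x‖ := by rw [hn, mul_one]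
    rw [Set.mem_setOf_eq, projH_norm_sq hn z, h1]
    rw [abs_le] at hcs
    nlinarith
  have himg2 : projH x n '' C ⊆ {w | w - x ∈ (ℝ ∙ n)ᗮ} :=
    by rintro w ⟨z, hz, rfl⟩; exact projH_sub_mem hn z
  have himgb : Bornology.IsBounded (projH x n '' C) := by
    apply (isBounded_closedBall (x := x) (r := r)).subset
    rintro w ⟨z, hz, rfl⟩
    obtain ⟨h1, h2⟩ := hsphC z hz
    have := projH_norm_sq (x := x) hn z
    rw [mem_closedBall, dist_eq_norm]
    nlinarith [norm_nonneg (projH x n z - x), sq_nonneg (⟪z - x, n⟫)]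
  calc μH[(m:ℝ)-1] C ≤ μH[(m:ℝ)-1] (graphMap x n r '' (projH x n '' C)) :=
        measure_mono hCsub
  _ ≤ (4:NNReal) ^ ((m:ℝ)-1) * μH[(m:ℝ)-1] (projH x n '' C) :=
        ((graphMap_lipschitzOn hn hr).mono himg1).hausdorffMeasure_image_le hd0
  _ < ⊤ := by
      apply ENNReal.mul_lt_top (ENNReal.rpow_lt_top_of_nonneg hd0 (by simp))
      rw [← finrank_hyper hm hn0]
      exact sub_hM_lt_top himgb himg2

lemma sphere_hM_lt_top (hm : 1 ≤ m) (hr : 0 < r) (x : EuclideanSpace ℝ (Fin m)) :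
    μH[(m:ℝ)-1] (sphere x r) < ⊤ := by
  have hopen : ∀ z : EuclideanSpace ℝ (Fin m),
      IsOpen {w : EuclideanSpace ℝ (Fin m) | r^2/2 < ⟪w - x, z - x⟫} :=
    fun z => isOpen_lt continuous_const ((continuous_id.sub continuous_const).inner
      continuous_const)
  have hcov : sphere x r ⊆ ⋃ z ∈ sphere x r, {w | r^2/2 < ⟪w - x, z - x⟫} := by
    intro z hz
    refine Set.mem_biUnion hz ?_
    have : ‖z - x‖ = r := by rw [← dist_eq_norm]; exact mem_sphere.mp hz
    rw [Set.mem_setOf_eq, real_inner_self_eq_norm_sq, this]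
    nlinarith
  obtain ⟨b, hbsub, hbfin, hbcov⟩ := (isCompact_sphere x r).elim_finite_subcover_image
    (fun z _ => hopen z) hcov
  have hkey : sphere x r ⊆ ⋃ z ∈ b, (sphere x r ∩
      {w | r/2 ≤ ⟪w - x, r⁻¹ • (z - x)⟫}) := by
    intro w hw
    obtain ⟨z, hz, hwz⟩ := Set.mem_iUnion₂.mp (hbcov hw)
    refine Set.mem_biUnion hz ⟨hw, ?_⟩
    rw [Set.mem_setOf_eq] at hwz ⊢
    rw [real_inner_smul_right]
    calc r/2 = r⁻¹ * (r^2/2) := by field_simp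
    _ ≤ _ := mul_le_mul_of_nonneg_left hwz.le (by positivity)
  calc μH[(m:ℝ)-1] (sphere x r) ≤ _ := measure_mono hkey
  _ < ⊤ := by
      apply measure_biUnion_lt_top hbfin
      intro z hz
      have hzx : ‖z - x‖ = r := by
        rw [← dist_eq_norm]; exact mem_sphere.mp (hbsub hz)
      have hn1 : ‖r⁻¹ • (z - x)‖ = 1 := by
        rw [norm_smul, hzx, norm_inv, Real.norm_eq_abs, abs_of_pos hr, inv_mul_cancel₀ hr.ne']
      exact cap_hM_lt_top hm hn1 hr x

end CapMeasure

set_option maxHeartbeats 1000000 in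
lemma sphere_cap_hM_pos {x : EuclideanSpace ℝ (Fin m)} {r : ℝ} (hm : 1 ≤ m) (hr : 0 < r)
    {y : EuclideanSpace ℝ (Fin m)} (hy : y ∈ sphere x r) {ε : ℝ} (hε : 0 < ε) :
    0 < μH[(m:ℝ)-1] (sphere x r ∩ ball y ε) := by
  have hyx : ‖y - x‖ = r := by rw [← dist_eq_norm]; exact mem_sphere.mp hy
  set n := r⁻¹ • (y - x) with hndef
  have hn : ‖n‖ = 1 := by
    rw [hndef, norm_smul, hyx, norm_inv, Real.norm_eq_abs, abs_of_pos hr, inv_mul_cancel₀ hr.ne']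
  have hn0 : n ≠ 0 := fun h => by rw [h, norm_zero] at hn; linarith
  have hyn : y - x = r • n := by rw [hndef, smul_smul, mul_inv_cancel₀ hr.ne', one_smul]
  set t := max (r/2) (r - ε^2/(4*r)) with htdef
  have ht1 : r/2 ≤ t := le_max_left _ _
  have ht0 : 0 < t := lt_of_lt_of_le (by linarith) ht1
  have ht2 : t < r := max_lt (by linarith) (sub_lt_self _ (by positivity))
  have hte : 2*r*(r - t) ≤ ε^2/2 := by
    have h3 : r - ε^2/(4*r) ≤ t := le_max_right _ _
    have : r - t ≤ ε^2/(4*r) := by linarith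
    calc 2*r*(r-t) ≤ 2*r*(ε^2/(4*r)) := by nlinarith
    _ = ε^2/2 := by field_simp; ring
  set C := sphere x r ∩ {z | t < ⟪z - x, n⟫} with hCdef
  -- C is inside the ball of radius ε around y
  have hCball : C ⊆ sphere x r ∩ ball y ε := by
    rintro z ⟨h1, h2⟩
    rw [Set.mem_setOf_eq] at h2
    refine ⟨h1, ?_⟩
    have hzx : ‖z - x‖ = r := by rw [← dist_eq_norm]; exact mem_sphere.mp h1
    have hd2 : dist z y ^ 2 = 2*r^2 - 2*r*⟪z - x, n⟫ := by
      rw [dist_eq_norm]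
      have hzy : z - y = (z - x) - (y - x) := by abel
      rw [hzy, norm_sub_sq_real, hzx, hyx, hyn, real_inner_smul_right]
      ring
    rw [mem_ball]
    nlinarith [dist_nonneg (x := z) (y := y), hd2, h2, hte, hr, hε]
  -- the projected hyperplane ball sits inside the projection of C
  set s₀ := Real.sqrt (r^2 - t^2) with hs₀
  have hs₀pos : 0 < s₀ := Real.sqrt_pos.mpr (by nlinarith)
  have hBsub : {w : EuclideanSpace ℝ (Fin m) | w - x ∈ (ℝ ∙ n)ᗮ ∧ dist w x < s₀}
      ⊆ projH x n '' C := by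
    rintro w ⟨hw1, hw2⟩
    set c := Real.sqrt (r^2 - ‖w - x‖^2) with hcdef
    have hwx2 : ‖w - x‖^2 < r^2 - t^2 := by
      rw [dist_eq_norm] at hw2
      have := Real.sq_sqrt (show (0:ℝ) ≤ r^2 - t^2 by nlinarith)
      nlinarith [norm_nonneg (w - x)]
    have hct : t < c := by
      rw [hcdef]
      calc t = Real.sqrt (t^2) := (Real.sqrt_sq ht0.le).symm
      _ < _ := Real.sqrt_lt_sqrt (by positivity) (by nlinarith)
    have hc2 : c^2 = r^2 - ‖w - x‖^2 := Real.sq_sqrt (by nlinarith)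
    obtain ⟨h1, h2, h3⟩ := proj_point_lemma hn hw1 c
    refine ⟨w + c • n, ⟨?_, ?_⟩, h3⟩
    · rw [mem_sphere, dist_eq_norm]
      nlinarith [norm_nonneg (w + c • n - x)]
    · rw [Set.mem_setOf_eq, h2]; exact hct
  -- conclude
  have hd0 : (0:ℝ) ≤ (m:ℝ) - 1 := by
    have : (1:ℝ) ≤ (m:ℝ) := by exact_mod_cast hm
    linarith
  have hpos : 0 < μH[(m:ℝ)-1] (projH x n '' C) := by
    calc (0:ENNReal) < μH[(m:ℝ)-1] {w : EuclideanSpace ℝ (Fin m) |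
        w - x ∈ (ℝ ∙ n)ᗮ ∧ dist w x < s₀} := by
          rw [← finrank_hyper hm hn0]
          exact sub_hM_pos _ x hs₀pos
    _ ≤ _ := measure_mono hBsub
  have hle : μH[(m:ℝ)-1] (projH x n '' C) ≤ μH[(m:ℝ)-1] C := by
    have := (LipschitzWith.lipschitzOnWith (projH_lipschitz (x := x) hn)
      (s := C)).hausdorffMeasure_image_le hd0
    simpa using this
  calc (0:ENNReal) < μH[(m:ℝ)-1] (projH x n '' C) := hpos
  _ ≤ μH[(m:ℝ)-1] C := hle
  _ ≤ _ := measure_mono hCball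


open RealInnerProductSpace

lemma eq_max_on_sphere {x : EuclideanSpace ℝ (Fin m)} {r M : ℝ} (hm : 1 ≤ m) (hr : 0 < r)
    {u : EuclideanSpace ℝ (Fin m) → ℝ} (hcont : ContinuousOn u (sphere x r))
    (hle : ∀ z ∈ sphere x r, u z ≤ M) (havg : sphAvg u x r = M) :
    ∀ y ∈ sphere x r, u y = M := by
  intro y hy
  by_contra hne
  have hylt : u y < M := lt_of_le_of_ne (hle y hy) hne
  set μ : Measure (EuclideanSpace ℝ (Fin m)) := μH[(m:ℝ)-1] with hμ
  set S := sphere x r with hS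
  have hSm : MeasurableSet S := (isClosed_sphere).measurableSet
  have hScomp : IsCompact S := isCompact_sphere x r
  have hV : μ S < ⊤ := sphere_hM_lt_top hm hr x
  have hVpos : 0 < μ S := by
    calc (0:ENNReal) < μ (S ∩ ball y 1) := sphere_cap_hM_pos hm hr hy one_pos
    _ ≤ μ S := measure_mono Set.inter_subset_left
  -- integrability
  have hint : IntegrableOn u S μ := by
    obtain ⟨C, hC⟩ := hScomp.exists_bound_of_continuousOn hcont
    haveI : IsFiniteMeasure (μ.restrict S) :=
      ⟨by rw [Measure.restrict_apply_univ]; exact hV⟩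
    refine Integrable.mono' (integrable_const C) (hcont.aestronglyMeasurable hSm) ?_
    exact (ae_restrict_iff' hSm).mpr (ae_of_all _ hC)
  -- neighborhood where u < M'
  set M' := (M + u y)/2 with hM'
  have hyM' : u y < M' := by rw [hM']; linarith
  have hM'M : M' < M := by rw [hM']; linarith
  have hnb : ∃ ε > 0, ∀ z ∈ S ∩ ball y ε, u z < M' := by
    have h1 : u ⁻¹' (Set.Iio M') ∈ nhdsWithin y S := hcont y hy (Iio_mem_nhds hyM')
    rw [Metric.mem_nhdsWithin_iff] at h1
    obtain ⟨ε, hε, hball⟩ := h1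
    exact ⟨ε, hε, fun z hz => hball ⟨hz.2, hz.1⟩⟩
  obtain ⟨ε, hε, hεlt⟩ := hnb
  set A := S ∩ ball y ε with hA
  set B := S \ ball y ε with hB
  have hAm : MeasurableSet A := hSm.inter measurableSet_ball
  have hBm : MeasurableSet B := hSm.diff measurableSet_ball
  have hApos : 0 < μ A := sphere_cap_hM_pos hm hr hy hε
  have hAfin : μ A < ⊤ := lt_of_le_of_lt (measure_mono Set.inter_subset_left) hV
  have hBfin : μ B < ⊤ := lt_of_le_of_lt (measure_mono Set.diff_subset) hV
  have hunion : A ∪ B = S := Set.inter_union_diff S (ball y ε)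
  have hdisj : Disjoint A B := Set.disjoint_sdiff_right.mono_left Set.inter_subset_right
  have hintA : IntegrableOn u A μ := hint.mono_set (hunion ▸ Set.subset_union_left)
  have hintB : IntegrableOn u B μ := hint.mono_set (hunion ▸ Set.subset_union_right)
  have hsplit : ∫ z in S, u z ∂μ = (∫ z in A, u z ∂μ) + ∫ z in B, u z ∂μ := by
    rw [← hunion] ; exact setIntegral_union hdisj hBm hintA hintB
  set a := (μ A).toReal with ha
  set b := (μ B).toReal with hb
  have hapos : 0 < a := ENNReal.toReal_pos hApos.ne' hAfin.ne
  have hbpos : 0 ≤ b := ENNReal.toReal_nonneg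
  have hab : a + b = (μ S).toReal := by
    rw [ha, hb, ← ENNReal.toReal_add hAfin.ne hBfin.ne, ← measure_union hdisj hBm, hunion]
  have hIA : ∫ z in A, u z ∂μ ≤ M' * a := by
    calc ∫ z in A, u z ∂μ ≤ ∫ _ in A, M' ∂μ := by
          apply setIntegral_mono_on hintA (integrableOn_const hAfin.ne) hAm
          exact fun z hz => (hεlt z hz).le
    _ = M' * a := by rw [setIntegral_const, smul_eq_mul, mul_comm]; rfl
  have hIB : ∫ z in B, u z ∂μ ≤ M * b := by
    calc ∫ z in B, u z ∂μ ≤ ∫ _ in B, M ∂μ := by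
          apply setIntegral_mono_on hintB (integrableOn_const hBfin.ne) hBm
          exact fun z hz => hle z hz.1
    _ = M * b := by rw [setIntegral_const, smul_eq_mul, mul_comm]; rfl
  have hVt : 0 < (μ S).toReal := ENNReal.toReal_pos hVpos.ne' hV.ne
  have hIS : ∫ z in S, u z ∂μ = M * (μ S).toReal := by
    have : ((μ S).toReal)⁻¹ * ∫ z in S, u z ∂μ = M := havg
    field_simp at this
    linarith [this]
  have key : M * (a + b) ≤ M' * a + M * b := by
    rw [hab]; rw [mul_comm M] at hIS ⊢
    linarith [hsplit, hIA, hIB, hIS]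
  nlinarith [key, hapos, hM'M, mul_pos (sub_pos.mpr hM'M) hapos]

theorem restricted_mvp_max_on_boundary {m : ℕ} (hm : 2 ≤ m)
    (D : Set (EuclideanSpace ℝ (Fin m))) (hD : IsOpen D) (hDc : IsConnected D)
    (hDb : Bornology.IsBounded D) (hne : D.Nonempty)
    (u : EuclideanSpace ℝ (Fin m) → ℝ) (hcont : ContinuousOn u (closure D))
    (hmv : ∀ x ∈ D, ∃ r : ℝ, 0 < r ∧ sphere x r ⊆ D ∧ u x = sphAvg u x r) :
    ∃ z ∈ frontier D, ∀ x ∈ closure D, u x ≤ u z := by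
  have hm1 : 1 ≤ m := le_trans (by norm_num) hm
  have hcls : IsCompact (closure D) :=
    Metric.isCompact_of_isClosed_isBounded isClosed_closure hDb.closure
  obtain ⟨x₀, hx₀mem, hx₀max⟩ := hcls.exists_isMaxOn hne.closure hcont
  set M := u x₀ with hM
  have hmax : ∀ z ∈ closure D, u z ≤ M := fun z hz => hx₀max hz
  set S := {z ∈ closure D | u z = M} with hSdef
  have hSclosed : IsClosed S := by
    have : S = closure D ∩ u ⁻¹' {M} := by
      ext z; simp [hSdef, Set.mem_setOf_eq]
    rw [this]
    exact hcont.preimage_isClosed_of_isClosed isClosed_closure isClosed_singleton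
  have hScomp : IsCompact S := hcls.of_isClosed_subset hSclosed (Set.sep_subset _ _)
  have hSne : S.Nonempty := ⟨x₀, hx₀mem, rfl⟩
  -- suppose no max point on the frontier
  by_contra hcon
  push_neg at hcon
  have hSD : S ⊆ D := by
    intro z hz
    by_contra hzD
    have hfr : z ∈ frontier D := by
      rw [frontier, hD.interior_eq]
      exact ⟨hz.1, hzD⟩
    obtain ⟨w, hw, hwgt⟩ := hcon z hfr
    exact absurd (hz.2 ▸ hmax w hw) (not_le.mpr (hz.2 ▸ hwgt))
  -- maximize the first coordinate over S
  set v : EuclideanSpace ℝ (Fin m) := EuclideanSpace.single (⟨0, by omega⟩ : Fin m) 1 with hv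
  have hvnorm : ‖v‖ = 1 := by rw [hv, EuclideanSpace.norm_single, norm_one]
  have hfcont : Continuous fun z : EuclideanSpace ℝ (Fin m) => ⟪z, v⟫ :=
    continuous_id.inner continuous_const
  obtain ⟨xs, hxsS, hxsmax⟩ := hScomp.exists_isMaxOn hSne hfcont.continuousOn
  obtain ⟨r, hr, hsub, havg⟩ := hmv xs (hSD hxsS)
  have husx : u xs = M := hxsS.2
  have hall : ∀ y ∈ sphere xs r, u y = M := by
    apply eq_max_on_sphere hm1 hr
      (hcont.mono (hsub.trans subset_closure))
      (fun z hz => hmax z (subset_closure (hsub hz)))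
    rw [← havg, husx]
  set y := xs + r • v with hy
  have hysph : y ∈ sphere xs r := by
    rw [mem_sphere, dist_eq_norm, hy]
    have : xs + r • v - xs = r • v := by abel
    rw [this, norm_smul, hvnorm, Real.norm_eq_abs, abs_of_pos hr, mul_one]
  have hyS : y ∈ S := ⟨subset_closure (hsub hysph), hall y hysph⟩
  have hcontr := hxsmax hyS
  simp only [Set.mem_setOf_eq] at hcontr
  have : ⟪y, v⟫ = ⟪xs, v⟫ + r := by
    rw [hy, inner_add_left, real_inner_smul_left, real_inner_self_eq_norm_sq, hvnorm]
    ring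
  rw [this] at hcontr
  linarith
end
end
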